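/- Let V(x) = 2x₁·e₁ + 2x₂·e₂ + x₃·e₃ and let T₁, T₂, T₃, g be as in the Kenmotsu example. Define the Lie derivative of g along V on vector fields X, Y by (L_V g)(X, Y)(x) = V·(g(X,Y))(x) − gₓ([V, X](x), Y(x)) − gₓ(X(x), [V, Y](x)). Then for every x with x₃ ≠ 0: (L_V g)(T₁, T₁)(x) = 2, (L_V g)(T₂, T₂)(x) = 2, (L_V g)(T₃, T₃)(x) = 0; in particular the trace over the orthonormal frame, Σᵢ (L_V g)(Tᵢ, Tᵢ)(x), equals 4. -/

import Mathlib

open scoped BigOperators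

noncomputable section

/-- Points/vectors of ℝ³. -/
abbrev V3 := Fin 3 → ℝ

/-- T₁(x) = x₃·e₁ -/
def T1 (x : V3) : V3 := ![x 2, 0, 0]

/-- T₂(x) = x₃·e₂ -/
def T2 (x : V3) : V3 := ![0, x 2, 0]

/-- T₃(x) = −x₃·e₃ -/
def T3 (x : V3) : V3 := ![0, 0, -(x 2)]

/-- The frame (T₁, T₂, T₃). -/
def T : Fin 3 → (V3 → V3) := ![T1, T2, T3]

/-- Lie bracket [X,Y](x) = (DY)ₓ(X(x)) − (DX)ₓ(Y(x)). -/
noncomputable def lieBracket (X Y : V3 → V3) (x : V3) : V3 :=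
  fderiv ℝ Y x (X x) - fderiv ℝ X x (Y x)

/-- The metric gₓ(u,v) = x₃⁻²·⟨u,v⟩ (Euclidean inner product). -/
noncomputable def gmet (x u v : V3) : ℝ := ((x 2) ^ 2)⁻¹ * ∑ i, u i * v i

/-- The 1-form ηₓ(v) = −v₃/x₃. -/
noncomputable def eta (x v : V3) : ℝ := -(v 2) / x 2

/-- The structure tensor φ: φ(e₁) = −e₂, φ(e₂) = e₁, φ(e₃) = 0. -/
def phi (v : V3) : V3 := ![v 1, -(v 0), 0]

/-- Directional derivative X·f at x: (Df)ₓ(X(x)). -/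
noncomputable def dirD (X : V3 → V3) (f : V3 → ℝ) (x : V3) : ℝ := fderiv ℝ f x (X x)

/-- The Koszul expression K(X,Y,Z). -/
noncomputable def koszul (X Y Z : V3 → V3) (x : V3) : ℝ :=
  dirD X (fun p => gmet p (Y p) (Z p)) x
    + dirD Y (fun p => gmet p (Z p) (X p)) x
    - dirD Z (fun p => gmet p (X p) (Y p)) x
    - gmet x (X x) (lieBracket Y Z x)
    - gmet x (Y x) (lieBracket X Z x)
    + gmet x (Z x) (lieBracket X Y x)

/-- Lie derivative of g along a vector field W:
(L_W g)(X,Y)(x) = W·(g(X,Y))(x) − gₓ([W,X](x), Y(x)) − gₓ(X(x), [W,Y](x)). -/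
noncomputable def lieDerivG (W X Y : V3 → V3) (x : V3) : ℝ :=
  dirD W (fun p => gmet p (X p) (Y p)) x
    - gmet x (lieBracket W X x) (Y x)
    - gmet x (X x) (lieBracket W Y x)

/-- The potential vector field V(x) = 2x₁·e₁ + 2x₂·e₂ + x₃·e₃. -/
def Vf (x : V3) : V3 := ![2 * x 0, 2 * x 1, x 2]

noncomputable def LT1 : V3 →L[ℝ] V3 :=
  ContinuousLinearMap.pi ![ContinuousLinearMap.proj 2, 0, 0]

noncomputable def LT2 : V3 →L[ℝ] V3 :=
  ContinuousLinearMap.pi ![0, ContinuousLinearMap.proj 2, 0]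

noncomputable def LT3 : V3 →L[ℝ] V3 :=
  ContinuousLinearMap.pi ![0, 0, -ContinuousLinearMap.proj 2]

noncomputable def LVf : V3 →L[ℝ] V3 :=
  ContinuousLinearMap.pi
    ![(2:ℝ) • ContinuousLinearMap.proj 0, (2:ℝ) • ContinuousLinearMap.proj 1,
      ContinuousLinearMap.proj 2]

lemma T1_eq : T1 = ⇑LT1 := by
  funext v i
  fin_cases i <;> simp [T1, LT1]

lemma T2_eq : T2 = ⇑LT2 := by
  funext v i
  fin_cases i <;> simp [T2, LT2]

lemma T3_eq : T3 = ⇑LT3 := by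
  funext v i
  fin_cases i <;> simp [T3, LT3]

lemma Vf_eq : Vf = ⇑LVf := by
  funext v i
  fin_cases i <;> simp [Vf, LVf]

lemma fderiv_T1 (x : V3) : fderiv ℝ T1 x = LT1 := by
  rw [T1_eq]; exact LT1.fderiv

lemma fderiv_T2 (x : V3) : fderiv ℝ T2 x = LT2 := by
  rw [T2_eq]; exact LT2.fderiv

lemma fderiv_T3 (x : V3) : fderiv ℝ T3 x = LT3 := by
  rw [T3_eq]; exact LT3.fderiv

lemma fderiv_Vf (x : V3) : fderiv ℝ Vf x = LVf := by
  rw [Vf_eq]; exact LVf.fderiv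

lemma nhds_ne (x : V3) (hx : x 2 ≠ 0) : ∀ᶠ p in nhds x, p 2 ≠ 0 := by
  have : IsOpen {p : V3 | p 2 ≠ 0} := isOpen_ne.preimage (continuous_apply 2)
  exact this.mem_nhds hx

lemma dirD_const (W : V3 → V3) (x : V3) (hx : x 2 ≠ 0)
    (f : V3 → ℝ) (c : ℝ) (hf : ∀ p : V3, p 2 ≠ 0 → f p = c) :
    dirD W f x = 0 := by
  have heq : f =ᶠ[nhds x] (fun _ => c) := (nhds_ne x hx).mono hf
  have : fderiv ℝ f x = fderiv ℝ (fun _ => c) x := heq.fderiv_eq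
  simp [dirD, this]

/-- (L_V g)(T₁,T₁) = 2, (L_V g)(T₂,T₂) = 2, (L_V g)(T₃,T₃) = 0,
and the trace over the orthonormal frame equals 4. -/
theorem stmt_11 : ∀ x : V3, x 2 ≠ 0 →
    lieDerivG Vf T1 T1 x = 2 ∧
    lieDerivG Vf T2 T2 x = 2 ∧
    lieDerivG Vf T3 T3 x = 0 ∧
    (∑ i : Fin 3, lieDerivG Vf (T i) (T i) x) = 4 := by
  intro x hx
  have h1 : lieDerivG Vf T1 T1 x = 2 := by
    have hd : dirD Vf (fun p => gmet p (T1 p) (T1 p)) x = 0 := by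
      refine dirD_const Vf x hx _ 1 (fun p hp => ?_)
      simp [gmet, T1, Fin.sum_univ_three]
      field_simp
    rw [lieDerivG, hd, lieBracket, fderiv_T1, fderiv_Vf]
    simp [gmet, T1, Vf, LT1, LVf, Fin.sum_univ_three]
    field_simp
    ring
  have h2 : lieDerivG Vf T2 T2 x = 2 := by
    have hd : dirD Vf (fun p => gmet p (T2 p) (T2 p)) x = 0 := by
      refine dirD_const Vf x hx _ 1 (fun p hp => ?_)
      simp [gmet, T2, Fin.sum_univ_three]
      field_simp
    rw [lieDerivG, hd, lieBracket, fderiv_T2, fderiv_Vf]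
    simp [gmet, T2, Vf, LT2, LVf, Fin.sum_univ_three]
    field_simp
    ring
  have h3 : lieDerivG Vf T3 T3 x = 0 := by
    have hd : dirD Vf (fun p => gmet p (T3 p) (T3 p)) x = 0 := by
      refine dirD_const Vf x hx _ 1 (fun p hp => ?_)
      simp [gmet, T3, Fin.sum_univ_three]
      field_simp
    rw [lieDerivG, hd, lieBracket, fderiv_T3, fderiv_Vf]
    simp [gmet, T3, Vf, LT3, LVf, Fin.sum_univ_three]
  refine ⟨h1, h2, h3, ?_⟩
  rw [Fin.sum_univ_three]
  simp only [T]
  rw [show (![T1, T2, T3] : Fin 3 → V3 → V3) 0 = T1 from rfl,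
      show (![T1, T2, T3] : Fin 3 → V3 → V3) 1 = T2 from rfl,
      show (![T1, T2, T3] : Fin 3 → V3 → V3) 2 = T3 from rfl,
      h1, h2, h3]
  norm_num
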